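/- Let W be an irreducible Markov generator with all edge rates positive along a connected graph, and let W̃ be the HTR generator built from the stalling steady state p^st. For any cycle C = (i_0, i_1, …, i_k = i_0) of distinct consecutive states none of whose edges is {1,2}, the cycle affinity reverses sign: ∑_{m} log( W̃_{i_{m+1} i_m} / W̃_{i_m i_{m+1}} ) = − ∑_m log( W_{i_{m+1} i_m} / W_{i_m i_{m+1}} ). -/

import Mathlib

/-- A generator is irreducible if any two distinct states are connected by a
chain of transitions with strictly positive rates (column = source state). -/
def MatrixIrreducible {n : ℕ} (W : Matrix (Fin n) (Fin n) ℝ) : Prop :=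
  ∀ i j : Fin n, i ≠ j → ∃ k : ℕ, ∃ c : Fin (k + 1) → Fin n,
    c 0 = j ∧ c (Fin.last k) = i ∧
    ∀ m : Fin k, 0 < W (c m.succ) (c m.castSucc)

lemma telescope_cycle {α : Type*} : ∀ (k : ℕ) (c : Fin (k + 1) → α) (f : α → ℝ),
    ∑ s : Fin k, (f (c s.succ) - f (c s.castSucc)) = f (c (Fin.last k)) - f (c 0) := by
  intro k
  induction k with
  | zero => intro c f; simp
  | succ k ih =>
    intro c f
    rw [Fin.sum_univ_castSucc]
    have h := ih (fun s => c s.castSucc) f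
    calc (∑ s : Fin k, (f (c s.castSucc.succ) - f (c s.castSucc.castSucc)))
          + (f (c (Fin.last k).succ) - f (c (Fin.last k).castSucc))
        = (∑ s : Fin k, (f (c s.succ.castSucc) - f (c s.castSucc.castSucc)))
          + (f (c (Fin.last (k+1))) - f (c (Fin.last k).castSucc)) := by
          simp only [Fin.succ_castSucc, Fin.succ_last]
      _ = (f (c (Fin.last k).castSucc) - f (c (0 : Fin (k+1)).castSucc))
          + (f (c (Fin.last (k+1))) - f (c (Fin.last k).castSucc)) := by rw [h]
      _ = f (c (Fin.last (k+1))) - f (c 0) := by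
          simp only [Fin.castSucc_zero]; ring

/-- Theorem 5a: along any cycle not containing the observable
edge `{1,2}` (indices `{0,1}`), the cycle affinity of the HTR generator `W̃`
(with `W̃_ij = W_ji pst_i / pst_j` off the observable edge) is the opposite of
that of `W`. -/
theorem HTR_cycle_affinity_reversal {m : ℕ}
    (W Wtil : Matrix (Fin (m + 3)) (Fin (m + 3)) ℝ)
    (hoff : ∀ i j : Fin (m + 3), i ≠ j → 0 ≤ W i j)
    (hcol : ∀ j : Fin (m + 3), ∑ i : Fin (m + 3), W i j = 0)
    (hirr : MatrixIrreducible W)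
    (pst : Fin (m + 3) → ℝ) (hpst : ∀ i, 0 < pst i)
    (hWtil12 : Wtil 0 1 = W 0 1) (hWtil21 : Wtil 1 0 = W 1 0)
    (hWtil : ∀ i j : Fin (m + 3), i ≠ j →
      ¬((i = 0 ∧ j = 1) ∨ (i = 1 ∧ j = 0)) →
      Wtil i j = W j i * pst i / pst j)
    (k : ℕ) (c : Fin (k + 1) → Fin (m + 3))
    (hcyc : c (Fin.last k) = c 0)
    (hdist : ∀ s : Fin k, c s.castSucc ≠ c s.succ)
    (hnoedge : ∀ s : Fin k,
      ¬((c s.castSucc = 0 ∧ c s.succ = 1) ∨ (c s.castSucc = 1 ∧ c s.succ = 0)))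
    (hposfwd : ∀ s : Fin k, 0 < W (c s.succ) (c s.castSucc))
    (hposbwd : ∀ s : Fin k, 0 < W (c s.castSucc) (c s.succ)) :
    ∑ s : Fin k, Real.log (Wtil (c s.succ) (c s.castSucc) /
        Wtil (c s.castSucc) (c s.succ)) =
    - ∑ s : Fin k, Real.log (W (c s.succ) (c s.castSucc) /
        W (c s.castSucc) (c s.succ)) := by
  have key : ∀ s : Fin k,
      Real.log (Wtil (c s.succ) (c s.castSucc) / Wtil (c s.castSucc) (c s.succ))
      = - Real.log (W (c s.succ) (c s.castSucc) / W (c s.castSucc) (c s.succ))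
        + 2 * ((fun x => Real.log (pst x)) (c s.succ)
             - (fun x => Real.log (pst x)) (c s.castSucc)) := by
    intro s
    set i := c s.succ
    set j := c s.castSucc
    have hij : i ≠ j := (hdist s).symm
    have hne1 : ¬((i = 0 ∧ j = 1) ∨ (i = 1 ∧ j = 0)) := by
      intro h; exact hnoedge s (h.symm.imp (fun h => ⟨h.2, h.1⟩) (fun h => ⟨h.2, h.1⟩))
    have hne2 : ¬((j = 0 ∧ i = 1) ∨ (j = 1 ∧ i = 0)) := hnoedge s
    have hWji : (0:ℝ) < W j i := hposbwd s
    have hWij : (0:ℝ) < W i j := hposfwd s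
    have hpi := hpst i
    have hpj := hpst j
    rw [hWtil i j hij hne1, hWtil j i hij.symm hne2]
    rw [Real.log_div (by positivity) (by positivity),
        Real.log_div (ne_of_gt hWij) (ne_of_gt hWji),
        Real.log_div (by positivity) (ne_of_gt hpj),
        Real.log_div (by positivity) (ne_of_gt hpi),
        Real.log_mul (ne_of_gt hWji) (ne_of_gt hpi),
        Real.log_mul (ne_of_gt hWij) (ne_of_gt hpj)]
    ring
  rw [Finset.sum_congr rfl (fun s _ => key s), Finset.sum_add_distrib,
      ← Finset.mul_sum, telescope_cycle k c (fun x => Real.log (pst x)), hcyc]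
  simp
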